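/- Let m ≥ 2 be an integer and β₁, ..., β_m real numbers with β_j > -1 for each j and β₁ + ... + β_m + m > 1. Then the integral over the simplex {0 < s₁ < ... < s_m < 1} of (s_m - s₁)^{β₁} ∏_{i=2}^m (s_i - s_{i-1})^{β_i} ds equals (m + β₁ + ... + β_m)^{-1} times the integral over the simplex {0 < u₁ < ... < u_{m-1} < 1} of (1 - u₁)^{β₁} · (u₂-u₁)^{β₂} · ... · (u_{m-1}-u_{m-2})^{β_{m-1}} · (1 - u_{m-1})^{β_m} du. -/

import Mathlib

open MeasureTheory

namespace SimplexScalingAux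


variable (n : ℕ)

/-- The scaling map: `Φ v = (t u₀, …, t uₙ, t)` where `t = v (last)`, `uⱼ = v j`. -/
def phi : (Fin (n+2) → ℝ) → (Fin (n+2) → ℝ) :=
  fun v i => if i = Fin.last (n+1) then v (Fin.last (n+1)) else v (Fin.last (n+1)) * v i

/-- Jacobian matrix of `phi` at `v`. -/
def Mmat (v : Fin (n+2) → ℝ) : Matrix (Fin (n+2)) (Fin (n+2)) ℝ :=
  fun i j =>
    if i = Fin.last (n+1) then (if j = Fin.last (n+1) then 1 else 0)
    else if j = i then v (Fin.last (n+1)) else if j = Fin.last (n+1) then v i else 0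

noncomputable def Lmap (v : Fin (n+2) → ℝ) : (Fin (n+2) → ℝ) →L[ℝ] (Fin (n+2) → ℝ) :=
  LinearMap.toContinuousLinearMap (Matrix.toLin' (Mmat n v))

lemma det_Lmap (v : Fin (n+2) → ℝ) :
    (Lmap n v).det = v (Fin.last (n+1)) ^ (n+1) := by
  have h1 : (Lmap n v).det = (Mmat n v).det := by
    rw [Lmap, ContinuousLinearMap.det]
    exact LinearMap.det_toLin' _
  rw [h1, Matrix.det_of_upperTriangular]
  · rw [Fin.prod_univ_castSucc]
    have h2 : ∀ i : Fin (n+1), Mmat n v i.castSucc i.castSucc = v (Fin.last (n+1)) := by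
      intro i
      simp [Mmat, (Fin.castSucc_lt_last i).ne]
    have h3 : Mmat n v (Fin.last (n+1)) (Fin.last (n+1)) = 1 := by simp [Mmat]
    rw [h3, Finset.prod_congr rfl (fun i _ => h2 i)]
    simp
  · intro i j hij
    rcases eq_or_ne i (Fin.last (n+1)) with hi | hi
    · have : j ≠ Fin.last (n+1) := by
        intro h; rw [h, hi] at hij; exact lt_irrefl _ hij
      simp [Mmat, hi, this]
    · have hji : j ≠ i := ne_of_lt hij
      have hjl : j ≠ Fin.last (n+1) := by
        intro h
        exact absurd (h ▸ hij) (not_lt.2 (Fin.le_last i))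
      simp [Mmat, hi, hji, hjl]

lemma hasFDerivAt_phi (v : Fin (n+2) → ℝ) : HasFDerivAt (phi n) (Lmap n v) v := by
  apply hasFDerivAt_pi''
  intro i
  rcases eq_or_ne i (Fin.last (n+1)) with hi | hi
  · subst hi
    have : (fun x : Fin (n+2) → ℝ => phi n x (Fin.last (n+1)))
        = fun x => x (Fin.last (n+1)) := by
      funext x; simp [phi]
    rw [this]
    have key : (ContinuousLinearMap.proj (R := ℝ) (φ := fun _ : Fin (n+2) => ℝ)
        (Fin.last (n+1))).comp (Lmap n v)
        = ContinuousLinearMap.proj (Fin.last (n+1)) := by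
      ext w
      simp only [ContinuousLinearMap.coe_comp', Function.comp_apply,
        ContinuousLinearMap.proj_apply, Lmap, LinearMap.coe_toContinuousLinearMap',
        Matrix.toLin'_apply, Matrix.mulVec, dotProduct, Mmat, if_true, ite_mul, one_mul,
        zero_mul]
      rw [Finset.sum_ite_eq' Finset.univ (Fin.last (n+1))]
      simp
    rw [key]
    exact (ContinuousLinearMap.proj (R := ℝ) (φ := fun _ : Fin (n+2) => ℝ)
      (Fin.last (n+1))).hasFDerivAt
  · have : (fun x : Fin (n+2) → ℝ => phi n x i)
        = fun x => x (Fin.last (n+1)) * x i := by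
      funext x; simp [phi, hi]
    rw [this]
    have hd := ((ContinuousLinearMap.proj (R := ℝ) (φ := fun _ : Fin (n+2) => ℝ)
        (Fin.last (n+1))).hasFDerivAt (x := v)).mul
        ((ContinuousLinearMap.proj (R := ℝ) (φ := fun _ : Fin (n+2) => ℝ) i).hasFDerivAt (x := v))
    convert hd using 1
    · rfl
    · rfl
    ext w
    simp only [ContinuousLinearMap.coe_comp', Function.comp_apply, ContinuousLinearMap.proj_apply,
      ContinuousLinearMap.add_apply, ContinuousLinearMap.coe_smul', Pi.smul_apply, smul_eq_mul]
    rw [Lmap]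
    simp only [LinearMap.coe_toContinuousLinearMap', Matrix.toLin'_apply, Matrix.mulVec,
      dotProduct, Mmat, if_neg hi]
    have hsplit : ∀ j : Fin (n+2),
        (if j = i then v (Fin.last (n+1)) else if j = Fin.last (n+1) then v i else 0) * w j
        = (if j = i then v (Fin.last (n+1)) * w j else 0)
          + (if j = Fin.last (n+1) then v i * w j else 0) := by
      intro j
      rcases eq_or_ne j i with rfl | h1
      · rw [if_pos rfl, if_pos rfl, if_neg hi, add_zero]
      · rw [if_neg h1, if_neg h1, zero_add, ite_mul, zero_mul]
    rw [Finset.sum_congr rfl (fun j _ => hsplit j), Finset.sum_add_distrib,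
      Finset.sum_ite_eq' Finset.univ i, Finset.sum_ite_eq' Finset.univ (Fin.last (n+1))]
    simp only [Finset.mem_univ, if_true]



variable (n : ℕ)

def U : Set (Fin (n+1) → ℝ) := {u | (∀ i, u i ∈ Set.Ioo (0:ℝ) 1) ∧ StrictMono u}

def T : Set (Fin (n+2) → ℝ) := {s | (∀ i, s i ∈ Set.Ioo (0:ℝ) 1) ∧ StrictMono s}

def S : Set (Fin (n+2) → ℝ) :=
  {v | v (Fin.last (n+1)) ∈ Set.Ioo (0:ℝ) 1 ∧ (fun j : Fin (n+1) => v j.castSucc) ∈ U n}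

lemma measurableSet_U : MeasurableSet (U n) := by
  have hU : U n = (⋂ i, {u : Fin (n+1) → ℝ | 0 < u i} ∩ {u | u i < 1}) ∩
      ⋂ i : Fin n, {u : Fin (n+1) → ℝ | u i.castSucc < u i.succ} := by
    ext u
    simp only [U, Set.mem_setOf_eq, Set.mem_inter_iff, Set.mem_iInter, Set.mem_Ioo]
    constructor
    · rintro ⟨h1, h2⟩
      exact ⟨fun i => ⟨(h1 i).1, (h1 i).2⟩, fun i => h2 (Fin.castSucc_lt_succ (i := i))⟩
    · rintro ⟨h1, h2⟩
      exact ⟨fun i => ⟨(h1 i).1, (h1 i).2⟩, Fin.strictMono_iff_lt_succ.2 h2⟩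
  rw [hU]
  exact (MeasurableSet.iInter fun i =>
      ((measurableSet_lt measurable_const (measurable_pi_apply i)).inter
        (measurableSet_lt (measurable_pi_apply i) measurable_const))).inter
    (MeasurableSet.iInter fun i =>
      measurableSet_lt (measurable_pi_apply _) (measurable_pi_apply _))

lemma measurableSet_S : MeasurableSet (S n) := by
  have h1 : Measurable fun (v : Fin (n+2) → ℝ) => (fun j : Fin (n+1) => v j.castSucc) :=
    measurable_pi_lambda _ fun j => measurable_pi_apply _
  have : S n = (fun v : Fin (n+2) → ℝ => v (Fin.last (n+1))) ⁻¹' Set.Ioo 0 1 ∩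
      (fun v : Fin (n+2) → ℝ => (fun j : Fin (n+1) => v j.castSucc)) ⁻¹' U n := rfl
  rw [this]
  exact ((measurable_pi_apply _) measurableSet_Ioo).inter (h1 (measurableSet_U n))

lemma injOn_phi : Set.InjOn (phi n) (S n) := by
  intro v hv w hw h
  have ht : v (Fin.last (n+1)) = w (Fin.last (n+1)) := by
    have := congrFun h (Fin.last (n+1))
    simpa [phi] using this
  have htpos : v (Fin.last (n+1)) ≠ 0 := ne_of_gt hv.1.1
  funext i
  rcases eq_or_ne i (Fin.last (n+1)) with rfl | hi
  · exact ht
  · have := congrFun h i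
    simp only [phi, if_neg hi] at this
    rw [ht] at this
    have hw0 : w (Fin.last (n+1)) ≠ 0 := ne_of_gt hw.1.1
    exact mul_left_cancel₀ hw0 this

lemma image_phi : phi n '' S n = T n := by
  ext s
  constructor
  · rintro ⟨v, ⟨⟨ht0, ht1⟩, hu, hmono⟩, rfl⟩
    set t := v (Fin.last (n+1)) with htdef
    constructor
    · intro i
      rcases eq_or_ne i (Fin.last (n+1)) with rfl | hi
      · simpa [phi] using Set.mem_Ioo.2 ⟨ht0, ht1⟩
      · obtain ⟨j, rfl⟩ := Fin.exists_castSucc_eq.2 hi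
        have hj := hu j
        simp only [phi, if_neg hi]
        constructor
        · exact mul_pos ht0 hj.1
        · have h4 : t * v j.castSucc < t := by
            calc t * v j.castSucc < t * 1 := mul_lt_mul_of_pos_left hj.2 ht0
              _ = t := mul_one t
          exact h4.trans ht1
    · rw [Fin.strictMono_iff_lt_succ]
      intro i
      rcases eq_or_ne i (Fin.last n) with rfl | hi
      · have h1 : (Fin.last n).succ = Fin.last (n+1) := Fin.succ_last n
        have h2 : ((Fin.last n).castSucc : Fin (n+2)) ≠ Fin.last (n+1) :=
          (Fin.castSucc_lt_last _).ne
        simp only [phi, h1, if_pos rfl, if_neg h2]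
        calc t * v (Fin.last n).castSucc < t * 1 :=
              mul_lt_mul_of_pos_left (hu (Fin.last n)).2 ht0
          _ = t := mul_one t
      · obtain ⟨j, rfl⟩ := Fin.exists_castSucc_eq.2 hi
        have h2 : (j.castSucc.castSucc : Fin (n+2)) ≠ Fin.last (n+1) :=
          (Fin.castSucc_lt_last _).ne
        have h3 : (j.castSucc.succ : Fin (n+2)) ≠ Fin.last (n+1) := by
          rw [Fin.succ_castSucc]
          exact (Fin.castSucc_lt_last _).ne
        simp only [phi, if_neg h2, if_neg h3]
        apply mul_lt_mul_of_pos_left _ ht0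
        rw [Fin.succ_castSucc]
        exact hmono (Fin.castSucc_lt_succ (i := j))
  · rintro ⟨hs, hmono⟩
    set t := s (Fin.last (n+1)) with htdef
    have ht0 : 0 < t := (hs _).1
    have ht1 : t < 1 := (hs _).2
    refine ⟨fun i => if i = Fin.last (n+1) then t else s i / t, ⟨?_, ?_, ?_⟩, ?_⟩
    · simpa using Set.mem_Ioo.2 ⟨ht0, ht1⟩
    · intro j
      have hj : (j.castSucc : Fin (n+2)) ≠ Fin.last (n+1) := (Fin.castSucc_lt_last _).ne
      simp only [if_neg hj]
      constructor
      · exact div_pos (hs _).1 ht0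
      · rw [div_lt_one ht0]
        exact hmono (Fin.castSucc_lt_last j)
    · intro a b hab
      have ha : (a.castSucc : Fin (n+2)) ≠ Fin.last (n+1) := (Fin.castSucc_lt_last _).ne
      have hb : (b.castSucc : Fin (n+2)) ≠ Fin.last (n+1) := (Fin.castSucc_lt_last _).ne
      simp only [if_neg ha, if_neg hb]
      gcongr
      exact hmono (Fin.castSucc_lt_castSucc_iff.2 hab)
    · funext i
      rcases eq_or_ne i (Fin.last (n+1)) with rfl | hi
      · simp [phi, htdef]
      · have hphi : phi n (fun i => if i = Fin.last (n+1) then t else s i / t) i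
            = t * (s i / t) := by simp [phi, hi]
        rw [hphi, mul_div_cancel₀ _ (ne_of_gt ht0)]



variable (n : ℕ)

noncomputable def g (β : Fin (n+2) → ℝ) (u : Fin (n+1) → ℝ) : ℝ :=
  (1 - u 0) ^ β 0 *
    (∏ i : Fin n, (u i.succ - u i.castSucc) ^ β i.succ.castSucc) *
    (1 - u (Fin.last n)) ^ β (Fin.last (n+1))

lemma integrand_eq (β : Fin (n+2) → ℝ) (v : Fin (n+2) → ℝ) (hv : v ∈ S n) :
    v (Fin.last (n+1)) ^ (n+1) * ((phi n v (Fin.last (n+1)) - phi n v 0) ^ β 0 *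
      ∏ i : Fin (n+1), (phi n v i.succ - phi n v i.castSucc) ^ β i.succ)
    = v (Fin.last (n+1)) ^ ((n+1 : ℝ) + ∑ j, β j) * g n β (fun j => v j.castSucc) := by
  obtain ⟨⟨ht0, ht1⟩, hu, humono⟩ := hv
  set t := v (Fin.last (n+1)) with htdef
  set u : Fin (n+1) → ℝ := fun j => v j.castSucc with hudef
  have h0ne : (0 : Fin (n+2)) ≠ Fin.last (n+1) := by
    simp [Fin.ext_iff]
  have hA : phi n v (Fin.last (n+1)) - phi n v 0 = t * (1 - u 0) := by
    simp only [phi, if_pos rfl, if_neg h0ne, if_true]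
    have h : u 0 = v 0 := by simp [hudef]
    rw [h]; ring
  have hlastfac : phi n v (Fin.last n).succ - phi n v (Fin.last n).castSucc
      = t * (1 - u (Fin.last n)) := by
    have h1 : (Fin.last n).succ = Fin.last (n+1) := Fin.succ_last n
    have h2 : ((Fin.last n).castSucc : Fin (n+2)) ≠ Fin.last (n+1) := (Fin.castSucc_lt_last _).ne
    simp only [phi, h1, if_pos rfl, if_neg h2, if_true]
    have h : u (Fin.last n) = v (Fin.last n).castSucc := rfl
    rw [h]; ring
  have hmid : ∀ j : Fin n, phi n v j.castSucc.succ - phi n v j.castSucc.castSucc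
      = t * (u j.succ - u j.castSucc) := by
    intro j
    have h2 : (j.castSucc.castSucc : Fin (n+2)) ≠ Fin.last (n+1) := (Fin.castSucc_lt_last _).ne
    have h3 : (j.succ.castSucc : Fin (n+2)) ≠ Fin.last (n+1) := (Fin.castSucc_lt_last _).ne
    simp only [phi, Fin.succ_castSucc, if_neg h2, if_neg h3]
    have ha : u j.succ = v j.succ.castSucc := rfl
    have hb : u j.castSucc = v j.castSucc.castSucc := rfl
    rw [ha, hb]; ring
  have h1u0 : (0:ℝ) ≤ 1 - u 0 := by linarith [(hu 0).2]
  have h1ul : (0:ℝ) ≤ 1 - u (Fin.last n) := by linarith [(hu (Fin.last n)).2]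
  have hdiff : ∀ j : Fin n, 0 ≤ u j.succ - u j.castSucc :=
    fun j => sub_nonneg.2 (humono (Fin.castSucc_lt_succ (i := j))).le
  have hfac : ∀ j : Fin n,
      (phi n v j.castSucc.succ - phi n v j.castSucc.castSucc) ^ β j.castSucc.succ
      = t ^ β j.succ.castSucc * (u j.succ - u j.castSucc) ^ β j.succ.castSucc := by
    intro j
    rw [hmid j, Fin.succ_castSucc, Real.mul_rpow ht0.le (hdiff j)]
  rw [hA, Fin.prod_univ_castSucc, hlastfac,
    Finset.prod_congr rfl (fun j _ => hfac j),
    Real.mul_rpow ht0.le h1u0, Real.mul_rpow ht0.le h1ul, Finset.prod_mul_distrib]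
  have hsucclast : (Fin.last n).succ = Fin.last (n+1) := Fin.succ_last n
  have hT : (t ^ (n+1) : ℝ) * (t ^ β 0 * ((∏ j : Fin n, t ^ β j.succ.castSucc)
      * t ^ β (Fin.last (n+1)))) = t ^ ((n+1:ℝ) + ∑ j, β j) := by
    rw [← Real.rpow_natCast t (n+1), ← Real.rpow_sum_of_pos ht0,
      ← Real.rpow_add ht0, ← Real.rpow_add ht0, ← Real.rpow_add ht0]
    congr 1
    rw [Fin.sum_univ_succ (f := β), Fin.sum_univ_castSucc (f := fun i : Fin (n+1) => β i.succ)]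
    have : ∀ j : Fin n, β (j.castSucc).succ = β j.succ.castSucc := by
      intro j; rw [Fin.succ_castSucc]
    rw [Finset.sum_congr rfl (fun j _ => this j), hsucclast]
    push_cast
    ring
  calc t ^ (n+1) * ((t ^ β 0 * (1 - u 0) ^ β 0) *
        ((∏ j : Fin n, t ^ β j.succ.castSucc) *
          (∏ j : Fin n, (u j.succ - u j.castSucc) ^ β j.succ.castSucc) *
          ((t ^ β (Fin.last n).succ) * (1 - u (Fin.last n)) ^ β (Fin.last n).succ)))
      = (t ^ (n+1) * (t ^ β 0 * ((∏ j : Fin n, t ^ β j.succ.castSucc)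
          * t ^ β (Fin.last (n+1))))) * g n β u := by
        rw [hsucclast, g]; ring
    _ = t ^ ((n+1:ℝ) + ∑ j, β j) * g n β u := by rw [hT]


end SimplexScalingAux


open SimplexScalingAux in
/-- The scaling reduction step (substitution `u_i = s_i / s_m`) in the proof of the key
simplex-integral lemma.  Here `m = n + 2 ≥ 2` and the exponents are `β 0, …, β (n+1)`
(i.e. `β₁, …, β_m`):
`∫_{0<s₁<⋯<s_m<1} (s_m - s₁)^{β₁} ∏_{i=2}^m (s_i - s_{i-1})^{β_i} ds
  = (m + Σβ)⁻¹ ∫_{0<u₁<⋯<u_{m-1}<1} (1-u₁)^{β₁} (u₂-u₁)^{β₂} ⋯ (u_{m-1}-u_{m-2})^{β_{m-1}}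
      (1-u_{m-1})^{β_m} du`. -/
theorem simplex_integral_scaling_step
    (n : ℕ) (β : Fin (n + 2) → ℝ) (hβ : ∀ j, -1 < β j)
    (hsum : (∑ j, β j) + (n + 2 : ℝ) > 1) :
    (∫ s in {s : Fin (n + 2) → ℝ | (∀ i, s i ∈ Set.Ioo (0 : ℝ) 1) ∧ StrictMono s},
        (s (Fin.last (n + 1)) - s 0) ^ β 0 *
          ∏ i : Fin (n + 1), (s i.succ - s i.castSucc) ^ β i.succ)
      = ((n + 2 : ℝ) + ∑ j, β j)⁻¹ *
          ∫ u in {u : Fin (n + 1) → ℝ | (∀ i, u i ∈ Set.Ioo (0 : ℝ) 1) ∧ StrictMono u},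
            (1 - u 0) ^ β 0 *
              (∏ i : Fin n, (u i.succ - u i.castSucc) ^ β i.succ.castSucc) *
              (1 - u (Fin.last n)) ^ β (Fin.last (n + 1)) := by
  set a : ℝ := (n+1 : ℝ) + ∑ j, β j with ha_def
  have ha : -1 < a := by push_cast [ha_def]; linarith
  have ha1 : a + 1 = (n + 2 : ℝ) + ∑ j, β j := by push_cast [ha_def]; ring
  have ha1pos : 0 < a + 1 := by rw [ha1]; linarith
  set G : (Fin (n+2) → ℝ) → ℝ := fun s =>
    (s (Fin.last (n + 1)) - s 0) ^ β 0 *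
      ∏ i : Fin (n + 1), (s i.succ - s i.castSucc) ^ β i.succ with hG_def
  set F : ℝ × (Fin (n+1) → ℝ) → ℝ := fun p => p.1 ^ a * g n β p.2 with hF_def
  have hTset : {s : Fin (n + 2) → ℝ | (∀ i, s i ∈ Set.Ioo (0 : ℝ) 1) ∧ StrictMono s}
      = phi n '' S n := (image_phi n).symm
  have hcov : (∫ s in phi n '' S n, G s)
      = ∫ v in S n, |(Lmap n v).det| • G (phi n v) :=
    integral_image_eq_integral_abs_det_fderiv_smul volume (measurableSet_S n)
      (fun x _ => (hasFDerivAt_phi n x).hasFDerivWithinAt) (injOn_phi n) G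
  -- the measurable equivalence splitting off the last coordinate
  set e := MeasurableEquiv.piFinSuccAbove (fun _ : Fin (n+2) => ℝ) (Fin.last (n+1)) with he_def
  have hmp := volume_preserving_piFinSuccAbove (fun _ : Fin (n+2) => ℝ) (Fin.last (n+1))
  have hpre : S n = e ⁻¹' (Set.Ioo (0:ℝ) 1 ×ˢ U n) := by
    ext v
    simp only [S, Set.mem_setOf_eq, Set.mem_preimage, he_def,
      MeasurableEquiv.piFinSuccAbove_apply, Set.mem_prod, Fin.insertNthEquiv,
      Equiv.coe_fn_symm_mk, Set.mem_prod]
    have hrm : (Fin.last (n+1)).removeNth v = fun j : Fin (n+1) => v j.castSucc := by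
      funext j; simp [Fin.removeNth, Fin.succAbove_last]
    rw [hrm]
  have hcongr : ∀ v ∈ S n, |(Lmap n v).det| • G (phi n v) = F (e v) := by
    intro v hv
    have ht0 : 0 < v (Fin.last (n+1)) := hv.1.1
    have hdet : |(Lmap n v).det| = v (Fin.last (n+1)) ^ (n+1) := by
      rw [det_Lmap, abs_of_pos (pow_pos ht0 _)]
    have hFe : F (e v) = v (Fin.last (n+1)) ^ a * g n β (fun j => v j.castSucc) := by
      have hrm : (Fin.last (n+1)).removeNth v = fun j : Fin (n+1) => v j.castSucc := by
        funext j; simp [Fin.removeNth, Fin.succAbove_last]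
      simp only [hF_def, he_def, MeasurableEquiv.piFinSuccAbove_apply, Fin.insertNthEquiv,
        Equiv.coe_fn_symm_mk, hrm]
    rw [hdet, hFe, smul_eq_mul]
    exact integrand_eq n β v hv
  calc (∫ s in {s : Fin (n + 2) → ℝ | (∀ i, s i ∈ Set.Ioo (0 : ℝ) 1) ∧ StrictMono s}, G s)
      = ∫ v in S n, |(Lmap n v).det| • G (phi n v) := by rw [hTset, hcov]
    _ = ∫ v in S n, F (e v) := setIntegral_congr_fun (measurableSet_S n) hcongr
    _ = ∫ p in Set.Ioo (0:ℝ) 1 ×ˢ U n, F p := by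
        rw [hpre]
        exact hmp.setIntegral_preimage_emb e.measurableEmbedding F _
    _ = (∫ t in Set.Ioo (0:ℝ) 1, t ^ a) * ∫ u in U n, g n β u := by
        rw [hF_def]
        exact setIntegral_prod_mul (fun t : ℝ => t ^ a) (g n β) _ _
    _ = ((n + 2 : ℝ) + ∑ j, β j)⁻¹ * ∫ u in U n, g n β u := by
        congr 1
        rw [← integral_Ioc_eq_integral_Ioo, ← intervalIntegral.integral_of_le zero_le_one,
          integral_rpow (Or.inl ha), Real.one_rpow, Real.zero_rpow (ne_of_gt ha1pos), ha1]
        ring
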